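/- Y-measurement rule (conjugate graph): let G be a simple graph on Fin n and i a vertex. Let τ_i(G) be the local complement of G at i (adjacency between any two distinct vertices of N_i is toggled, all other adjacencies unchanged), let g' := τ_i(G) − i (vertex i and its edges deleted), and consider the encoded graph states |g'_ℓ⟩ of g' with square-vertex set N_i, on the qubits Fin n ∖ {i}. Let |0'⟩ := (|0⟩ − i|1⟩)/√2 and |1'⟩ := (|0⟩ + i|1⟩)/√2 be the eigenvectors of the one-qubit Pauli Y. Then there exist complex numbers c_0, c_1 of modulus 1 such that, denoting by ⟨y'|_i the partial inner product against |y'⟩ on qubit i, one has ⟨0'|_i |G⟩ = (c_0/√2)·|g'_{0}⟩ and ⟨1'|_i |G⟩ = (c_1/√2)·|g'_{𝟙_{N_i}}⟩, where 0 is the all-zero label and 𝟙_{N_i} is the label that is 1 exactly on N_i. -/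

import Mathlib

noncomputable section

open scoped ComplexConjugate

/-- The Hilbert space of qubits indexed by `V`, as functions from bit strings to `ℂ`. -/
abbrev QState (V : Type) : Type := (V → Fin 2) → ℂ

/-- The diagonal operator with diagonal entries `d`. -/
def diagOp {V : Type} (d : (V → Fin 2) → ℂ) : QState V →ₗ[ℂ] QState V where
  toFun f := fun x => d x * f x
  map_add' f g := by funext x; simp [mul_add]
  map_smul' c f := by funext x; simp [smul_eq_mul]; ring

/-- The Pauli `Z` operator on qubit `i`. -/
def Zop {V : Type} (i : V) : QState V →ₗ[ℂ] QState V :=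
  diagOp fun x => (-1 : ℂ) ^ (x i : ℕ)

/-- The Pauli `X` operator on qubit `i` (bit flip). -/
def Xop {V : Type} [DecidableEq V] (i : V) : QState V →ₗ[ℂ] QState V where
  toFun f := fun x => f (Function.update x i (x i + 1))
  map_add' f g := rfl
  map_smul' c f := rfl

/-- The phase gate `S` on qubit `i`, sending `|x⟩` to `(-i)^(x i) |x⟩`. -/
def Sop {V : Type} (i : V) : QState V →ₗ[ℂ] QState V :=
  diagOp fun x => (-Complex.I) ^ (x i : ℕ)

/-- The Pauli `Y` operator on qubit `i`, `Y = i·X·Z`. -/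
def Yop {V : Type} [DecidableEq V] (i : V) : QState V →ₗ[ℂ] QState V :=
  Complex.I • (Xop i ∘ₗ Zop i)

/-- `qVal G x` is the number of edges of `G` both of whose endpoints carry bit 1 in `x`. -/
def qVal {V : Type} (G : SimpleGraph V) (x : V → Fin 2) : ℕ :=
  Nat.card {e : Sym2 V // e ∈ G.edgeSet ∧ ∀ v ∈ e, x v = 1}

/-- The graph state `|G⟩`, with amplitudes `2^{-n/2} (-1)^{q_G(x)}`. -/
def graphState {V : Type} [Fintype V] (G : SimpleGraph V) : QState V :=
  fun x => (((Real.sqrt 2)⁻¹ ^ Fintype.card V : ℝ) : ℂ) * (-1 : ℂ) ^ qVal G x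

/-- The labeled/encoded graph state `|𝒢_ℓ⟩ = (∏_i Z_i^{ℓ_i}) (∏_{j ∈ Vsq} S_j) |G⟩`,
with square-vertex set `Vsq`. -/
def encSq {V : Type} [Fintype V] (G : SimpleGraph V) (Vsq : Set V) (ℓ : V → Fin 2) : QState V :=
  fun x => (-1 : ℂ) ^ Nat.card {i : V // ℓ i = 1 ∧ x i = 1}
    * (-Complex.I) ^ Nat.card {j : V // j ∈ Vsq ∧ x j = 1}
    * graphState G x

/-- The encoded graph state `|G_ℓ⟩` (no square vertices). -/
def encG {V : Type} [Fintype V] (G : SimpleGraph V) (ℓ : V → Fin 2) : QState V :=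
  encSq G ∅ ℓ

open Classical in
/-- The stabilizer operator of vertex `i`: `X_i ∏_{j ∈ N_i} Z_j` for circular vertices,
`Y_i ∏_{j ∈ N_i} Z_j` for square vertices (`i ∈ Vsq`). -/
def Kop {V : Type} [DecidableEq V] (G : SimpleGraph V) (Vsq : Set V) (i : V) :
    QState V →ₗ[ℂ] QState V :=
  (if i ∈ Vsq then Yop i else Xop i) ∘ₗ
    diagOp fun x => (-1 : ℂ) ^ Nat.card {j : V // G.Adj i j ∧ x j = 1}

/-- Merge a bit string on `P` with a bit string on the complement of `P`. -/
def mergeBits {V : Type} [DecidableEq V] (P : Finset V) (a : {i // i ∈ P} → Fin 2)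
    (c : {i // i ∉ P} → Fin 2) : V → Fin 2 :=
  fun i => if h : i ∈ P then a ⟨i, h⟩ else c ⟨i, h⟩

/-- The reduced density matrix of the pure state `ψ` on the qubits in `P`:
`(a, b) ↦ ∑_c ⟨a⊔c|ψ⟩⟨ψ|b⊔c⟩`. -/
def red {V : Type} [Fintype V] [DecidableEq V] (P : Finset V) (ψ : QState V) :
    ({i // i ∈ P} → Fin 2) → ({i // i ∈ P} → Fin 2) → ℂ :=
  fun a b => ∑ c : {i // i ∉ P} → Fin 2, ψ (mergeBits P a c) * conj (ψ (mergeBits P b c))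

/-- The computational basis vector `|y⟩`. -/
def basisVec {V : Type} [Fintype V] [DecidableEq V] (y : V → Fin 2) : QState V :=
  fun x => if x = y then 1 else 0

/-- The matrix entry `⟨x|A|y⟩` of an operator. -/
def opEntry {V : Type} [Fintype V] [DecidableEq V] (A : QState V →ₗ[ℂ] QState V)
    (x y : V → Fin 2) : ℂ := A (basisVec y) x

/-- `A` acts trivially outside `P`: it equals `M ⊗ Id` for some operator `M` on the
qubits in `P`. -/
def trivialOutside {V : Type} [Fintype V] [DecidableEq V] (P : Finset V)
    (A : QState V →ₗ[ℂ] QState V) : Prop :=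
  ∃ M : ({i // i ∈ P} → Fin 2) → ({i // i ∈ P} → Fin 2) → ℂ,
    ∀ a b c c', opEntry A (mergeBits P a c) (mergeBits P b c') = if c = c' then M a b else 0

/-- The product `∏_{i ∈ T} K_i` of (commuting) operators, taken in sorted order. -/
def prodOps {V : Type} [LinearOrder V] (T : Finset V)
    (K : V → QState V →ₗ[ℂ] QState V) : QState V →ₗ[ℂ] QState V :=
  (T.sort (· ≤ ·)).foldr (fun i acc => K i ∘ₗ acc) LinearMap.id


/-- The local complement of `G` at `i`: adjacency is toggled between distinct
neighbours of `i` and unchanged otherwise. -/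
def localComp {V : Type} (G : SimpleGraph V) (i : V) : SimpleGraph V where
  Adj a b := Xor' (G.Adj a b) (G.Adj i a ∧ G.Adj i b ∧ a ≠ b)
  symm := by
    constructor
    intro a b h
    unfold Xor' at h ⊢
    rcases h with ⟨h1, h2⟩ | ⟨h1, h2⟩
    · exact Or.inl ⟨h1.symm, fun hc => h2 ⟨hc.2.1, hc.1, hc.2.2.symm⟩⟩
    · exact Or.inr ⟨⟨h1.2.1, h1.1, h1.2.2.symm⟩, fun hc => h2 hc.symm⟩
  loopless := by
    constructor
    intro a h
    rcases h with ⟨h1, _⟩ | ⟨⟨_, _, h3⟩, _⟩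
    · exact G.loopless.irrefl a h1
    · exact h3 rfl

/-- Components of the Pauli `Y` eigenvectors `|0'⟩ = (|0⟩ − i|1⟩)/√2` and
`|1'⟩ = (|0⟩ + i|1⟩)/√2`. -/
def ketY (s z : Fin 2) : ℂ :=
  (((Real.sqrt 2)⁻¹ : ℝ) : ℂ) * (if z = 0 then 1 else if s = 0 then -Complex.I else Complex.I)

lemma localComp_adj {V : Type} (G : SimpleGraph V) (i a b : V) :
    (localComp G i).Adj a b ↔ Xor' (G.Adj a b) (G.Adj i a ∧ G.Adj i b ∧ a ≠ b) := Iff.rfl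

lemma forall_mem_sym2_iff {V : Type} (f : V → Fin 2) (a b : V) :
    (∀ v ∈ s(a, b), f v = 1) ↔ f a = 1 ∧ f b = 1 := by
  simp [Sym2.mem_iff, or_imp, forall_and, forall_eq]

lemma keyC0 (m : ℕ) : (1 : ℂ) + Complex.I * (-1) ^ m
    = (1 + Complex.I) * (-Complex.I) ^ m * (-1) ^ (m.choose 2) := by
  induction m with
  | zero => norm_num
  | succ k ih =>
    have hch : (k + 1).choose 2 = k.choose 2 + k := by
      rw [Nat.choose_succ_succ]
      simp [Nat.choose_one_right, Nat.add_comm]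
    have ht : ((-1 : ℂ)) ^ k * (-1) ^ k = 1 := by
      rw [← mul_pow]; norm_num
    have h2 : Complex.I * Complex.I = -1 := Complex.I_mul_I
    rw [hch, pow_succ, pow_succ, pow_add]
    linear_combination (-Complex.I * (-1 : ℂ) ^ k) * ih + ((-1:ℂ)^k * (-1)^k) * h2 - ht

lemma keyC1 (m : ℕ) : (1 : ℂ) - Complex.I * (-1) ^ m
    = (1 - Complex.I) * Complex.I ^ m * (-1) ^ (m.choose 2) := by
  induction m with
  | zero => norm_num
  | succ k ih =>
    have hch : (k + 1).choose 2 = k.choose 2 + k := by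
      rw [Nat.choose_succ_succ]
      simp [Nat.choose_one_right, Nat.add_comm]
    have ht : ((-1 : ℂ)) ^ k * (-1) ^ k = 1 := by
      rw [← mul_pow]; norm_num
    have h2 : Complex.I * Complex.I = -1 := Complex.I_mul_I
    rw [hch, pow_succ, pow_succ, pow_add]
    linear_combination (Complex.I * (-1 : ℂ) ^ k) * ih + ((-1:ℂ)^k * (-1)^k) * h2 - ht

lemma fact1 {V : Type} [Fintype V] [DecidableEq V] (G : SimpleGraph V) (i : V) (x : V → Fin 2)
    (hx : x i = 0) :
    qVal G (Function.update x i 1)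
      = qVal G x + Nat.card {j : V // G.Adj i j ∧ x j = 1} := by
  classical
  have h01 : (0 : Fin 2) ≠ 1 := by decide
  have hq : ∀ z : V → Fin 2,
      qVal G z = {e : Sym2 V | e ∈ G.edgeSet ∧ ∀ v ∈ e, z v = 1}.ncard :=
    fun z => Nat.card_coe_set_eq _
  have hkey : {e : Sym2 V | e ∈ G.edgeSet ∧ ∀ v ∈ e, Function.update x i 1 v = 1}
      = {e : Sym2 V | e ∈ G.edgeSet ∧ ∀ v ∈ e, x v = 1}
        ∪ ((fun j => s(i, j)) '' {j : V | G.Adj i j ∧ x j = 1}) := by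
    ext e
    induction e using Sym2.ind with
    | _ a b =>
      simp only [Set.mem_setOf_eq, Set.mem_union, Set.mem_image, SimpleGraph.mem_edgeSet,
        forall_mem_sym2_iff]
      constructor
      · rintro ⟨hab, ha, hb⟩
        by_cases hai : a = i
        · subst hai
          have hbi : b ≠ a := fun h => G.loopless.irrefl a (h ▸ hab)
          right
          refine ⟨b, ⟨hab, ?_⟩, rfl⟩
          rwa [Function.update_of_ne hbi] at hb
        · by_cases hbi : b = i
          · subst hbi
            right
            refine ⟨a, ⟨G.adj_symm hab, ?_⟩, Sym2.eq_swap⟩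
            rwa [Function.update_of_ne hai] at ha
          · left
            refine ⟨hab, ?_, ?_⟩
            · rwa [Function.update_of_ne hai] at ha
            · rwa [Function.update_of_ne hbi] at hb
      · rintro (⟨hab, ha, hb⟩ | ⟨j, ⟨hj, hxj⟩, he⟩)
        · refine ⟨hab, ?_, ?_⟩
          · by_cases h : a = i
            · subst h; simp
            · rwa [Function.update_of_ne h]
          · by_cases h : b = i
            · subst h; simp
            · rwa [Function.update_of_ne h]
        · have hji : j ≠ i := fun h => G.loopless.irrefl i (h ▸ hj)
          rcases Sym2.eq_iff.mp he with ⟨hia, hjb⟩ | ⟨hib, hja⟩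
          · subst hia; subst hjb
            exact ⟨hj, by simp, by rwa [Function.update_of_ne hji]⟩
          · subst hib; subst hja
            exact ⟨G.adj_symm hj, by rwa [Function.update_of_ne hji], by simp⟩
  have hm : ((fun j => s(i, j)) '' {j : V | G.Adj i j ∧ x j = 1}).ncard
      = Nat.card {j : V // G.Adj i j ∧ x j = 1} := by
    rw [Set.ncard_image_of_injective _ (fun j j' h => Sym2.congr_right.mp h)]
    exact (Nat.card_coe_set_eq _).symm
  have hdisj : Disjoint {e : Sym2 V | e ∈ G.edgeSet ∧ ∀ v ∈ e, x v = 1}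
      ((fun j => s(i, j)) '' {j : V | G.Adj i j ∧ x j = 1}) := by
    rw [Set.disjoint_left]
    rintro e ⟨_, hall⟩ ⟨j, hj, rfl⟩
    have := hall i (Sym2.mem_mk_left i j)
    rw [hx] at this
    exact h01 this
  rw [hq, hq, hkey, Set.ncard_union_eq hdisj, hm]

lemma fact2a {V : Type} [DecidableEq V] (H : SimpleGraph V) (i : V)
    (r : ↥{j : V | j ≠ i} → Fin 2) :
    qVal (H.induce {j | j ≠ i}) r
      = qVal H (fun k => if h : k = i then 0 else r ⟨k, h⟩) := by
  classical
  set x : V → Fin 2 := fun k => if h : k = i then 0 else r ⟨k, h⟩ with hxdef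
  have hxi : x i = 0 := by simp [hxdef]
  have hxne : ∀ (k : V) (h : k ≠ i), x k = r ⟨k, h⟩ := by
    intro k h; simp [hxdef, h]
  have hq1 : qVal (H.induce {j | j ≠ i}) r
      = {e : Sym2 ↥{j : V | j ≠ i} |
          e ∈ (H.induce {j | j ≠ i}).edgeSet ∧ ∀ v ∈ e, r v = 1}.ncard :=
    Nat.card_coe_set_eq _
  have hq2 : qVal H x = {e : Sym2 V | e ∈ H.edgeSet ∧ ∀ v ∈ e, x v = 1}.ncard :=
    Nat.card_coe_set_eq _
  rw [hq1, hq2,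
    ← Set.ncard_image_of_injective _ (Sym2.map.injective (Subtype.coe_injective))]
  congr 1
  ext e
  constructor
  · rintro ⟨e', ⟨hadj, hall⟩, rfl⟩
    induction e' using Sym2.ind with
    | _ a b =>
      obtain ⟨ha, hb⟩ := (forall_mem_sym2_iff r a b).mp hall
      rw [Sym2.map_pair_eq]
      rw [SimpleGraph.mem_edgeSet] at hadj
      refine ⟨(SimpleGraph.mem_edgeSet H).mpr hadj, (forall_mem_sym2_iff x _ _).mpr ⟨?_, ?_⟩⟩
      · rw [hxne a.1 a.2]; simpa using ha
      · rw [hxne b.1 b.2]; simpa using hb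
  · intro he
    induction e using Sym2.ind with
    | _ a b =>
      obtain ⟨hadj, hall⟩ := he
      obtain ⟨ha, hb⟩ := (forall_mem_sym2_iff x a b).mp hall
      rw [SimpleGraph.mem_edgeSet] at hadj
      have hai : a ≠ i := by intro h; rw [h, hxi] at ha; exact absurd ha (by decide)
      have hbi : b ≠ i := by intro h; rw [h, hxi] at hb; exact absurd hb (by decide)
      refine ⟨s(⟨a, hai⟩, ⟨b, hbi⟩), ⟨(SimpleGraph.mem_edgeSet _).mpr hadj,
        (forall_mem_sym2_iff r _ _).mpr ⟨?_, ?_⟩⟩, by rw [Sym2.map_pair_eq]⟩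
      · rw [← hxne a hai]; exact ha
      · rw [← hxne b hbi]; exact hb

lemma fact2b {V : Type} [Fintype V] [DecidableEq V] (G : SimpleGraph V) (i : V)
    (x : V → Fin 2) :
    ∃ k, qVal (localComp G i) x + 2 * k
      = qVal G x + Nat.card {e : Sym2 V // (∀ v ∈ e, G.Adj i v ∧ x v = 1) ∧ ¬e.IsDiag} := by
  classical
  set A := {e : Sym2 V | e ∈ G.edgeSet ∧ ∀ v ∈ e, x v = 1} with hA
  set B := {e : Sym2 V | (∀ v ∈ e, G.Adj i v ∧ x v = 1) ∧ ¬e.IsDiag} with hB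
  have hq1 : qVal (localComp G i) x
      = {e : Sym2 V | e ∈ (localComp G i).edgeSet ∧ ∀ v ∈ e, x v = 1}.ncard :=
    Nat.card_coe_set_eq _
  have hq2 : qVal G x = A.ncard := Nat.card_coe_set_eq _
  have hq3 : Nat.card {e : Sym2 V // (∀ v ∈ e, G.Adj i v ∧ x v = 1) ∧ ¬e.IsDiag}
      = B.ncard := Nat.card_coe_set_eq _
  have hT : {e : Sym2 V | e ∈ (localComp G i).edgeSet ∧ ∀ v ∈ e, x v = 1}
      = (A \ B) ∪ (B \ A) := by
    ext e
    induction e using Sym2.ind with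
    | _ a b =>
      simp only [hA, hB, Set.mem_setOf_eq, Set.mem_union, Set.mem_diff,
        SimpleGraph.mem_edgeSet, Sym2.ball, Sym2.mk_isDiag_iff, localComp_adj, Xor', xor_def, ne_eq]
      tauto
  refine ⟨(A ∩ B).ncard, ?_⟩
  rw [hq1, hq2, hq3, hT,
    Set.ncard_union_eq (disjoint_sdiff_sdiff) (Set.toFinite _) (Set.toFinite _)]
  have h1 : (A \ B).ncard + (A ∩ B).ncard = A.ncard := by
    rw [add_comm]
    exact Set.ncard_inter_add_ncard_diff_eq_ncard A B (Set.toFinite _)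
  have h2 : (B \ A).ncard + (B ∩ A).ncard = B.ncard := by
    rw [add_comm]
    exact Set.ncard_inter_add_ncard_diff_eq_ncard B A (Set.toFinite _)
  have h3 : (B ∩ A).ncard = (A ∩ B).ncard := by rw [Set.inter_comm]
  omega

lemma fact2c {V : Type} [Fintype V] [DecidableEq V] (G : SimpleGraph V) [DecidableRel G.Adj]
    (i : V) (x : V → Fin 2) :
    Nat.card {e : Sym2 V // (∀ v ∈ e, G.Adj i v ∧ x v = 1) ∧ ¬e.IsDiag}
      = (Nat.card {j : V // G.Adj i j ∧ x j = 1}).choose 2 := by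
  classical
  set T : Finset V := Finset.univ.filter (fun j => G.Adj i j ∧ x j = 1) with hT
  have hTcard : Nat.card {j : V // G.Adj i j ∧ x j = 1} = T.card := by
    rw [Nat.card_eq_fintype_card, hT]
    exact Fintype.card_subtype _
  have hset : {e : Sym2 V | (∀ v ∈ e, G.Adj i v ∧ x v = 1) ∧ ¬e.IsDiag}
      = ↑(T.offDiag.image Sym2.mk.uncurry) := by
    ext e
    induction e using Sym2.ind with
    | _ a b =>
      simp only [Set.mem_setOf_eq, Sym2.ball, Sym2.mk_isDiag_iff, Finset.coe_image,
        Set.mem_image, Finset.mem_coe, Finset.mem_offDiag, hT, Finset.mem_filter,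
        Finset.mem_univ, true_and, Function.uncurry_apply_pair]
      constructor
      · rintro ⟨⟨ha, hb⟩, hne⟩
        exact ⟨(a, b), ⟨ha, hb, hne⟩, rfl⟩
      · rintro ⟨⟨p, q⟩, ⟨hp, hq, hne⟩, he⟩
        rcases Sym2.eq_iff.mp he with ⟨rfl, rfl⟩ | ⟨rfl, rfl⟩
        · exact ⟨⟨hp, hq⟩, hne⟩
        · exact ⟨⟨hq, hp⟩, fun h => hne h.symm⟩
  have h0 : Nat.card {e : Sym2 V // (∀ v ∈ e, G.Adj i v ∧ x v = 1) ∧ ¬e.IsDiag}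
      = {e : Sym2 V | (∀ v ∈ e, G.Adj i v ∧ x v = 1) ∧ ¬e.IsDiag}.ncard :=
    Nat.card_coe_set_eq _
  rw [h0, hset, Set.ncard_coe_finset, Sym2.card_image_offDiag, hTcard]


/-- Y-measurement rule / conjugate graph: pairing the graph state `|G⟩`
with the Pauli-`Y` eigenvectors `|0'⟩, |1'⟩` on qubit `i` yields, up to unimodular
phases `c₀, c₁`, the states `(1/√2)|g'_0⟩` and `(1/√2)|g'_{𝟙_{N_i}}⟩`, where
`g' = τ_i(G) − i` with square-vertex set `N_i`. -/

theorem y_measurement_rule (n : ℕ) (G : SimpleGraph (Fin n)) [DecidableRel G.Adj]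
    (i : Fin n) :
    ∃ c₀ c₁ : ℂ, ‖c₀‖ = 1 ∧ ‖c₁‖ = 1 ∧
      (∀ r : ↥{j : Fin n | j ≠ i} → Fin 2,
        (∑ z : Fin 2, conj (ketY 0 z) *
            graphState G (fun k => if h : k = i then z else r ⟨k, h⟩)) =
          c₀ * (((Real.sqrt 2)⁻¹ : ℝ) : ℂ) *
            encSq ((localComp G i).induce {j | j ≠ i}) {j | G.Adj i j.1}
              (fun _ => 0) r) ∧
      (∀ r : ↥{j : Fin n | j ≠ i} → Fin 2,
        (∑ z : Fin 2, conj (ketY 1 z) *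
            graphState G (fun k => if h : k = i then z else r ⟨k, h⟩)) =
          c₁ * (((Real.sqrt 2)⁻¹ : ℝ) : ℂ) *
            encSq ((localComp G i).induce {j | j ≠ i}) {j | G.Adj i j.1}
              (fun j => if G.Adj i j.1 then 1 else 0) r) := by
  classical
  have hs2 : (0 : ℝ) < Real.sqrt 2 := Real.sqrt_pos.mpr (by norm_num)
  set c : ℂ := (((Real.sqrt 2)⁻¹ : ℝ) : ℂ) with hc
  have habsc : ‖c‖ = (Real.sqrt 2)⁻¹ := by
    rw [hc, Complex.norm_real, Real.norm_of_nonneg (by positivity)]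
  have hnpos : 0 < n := i.pos
  have hn : n - 1 + 1 = n := Nat.succ_pred_eq_of_pos hnpos
  have hcard : Fintype.card ↥{j : Fin n | j ≠ i} = n - 1 := by
    have h1 : Fintype.card ↥{j : Fin n | j ≠ i}
        = (Finset.univ.filter (fun j : Fin n => j ≠ i)).card := by
      rw [← Fintype.card_subtype]
      apply Fintype.card_congr
      exact Equiv.refl _
    rw [h1, Finset.filter_ne', Finset.card_erase_of_mem (Finset.mem_univ i),
      Finset.card_univ, Fintype.card_fin]
  have gse : ∀ x : Fin n → Fin 2, graphState G x = c ^ n * (-1) ^ qVal G x := by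
    intro x
    rw [graphState, Fintype.card_fin, hc]
    push_cast
    rfl
  have gse' : ∀ y : ↥{j : Fin n | j ≠ i} → Fin 2,
      graphState ((localComp G i).induce {j | j ≠ i}) y
        = c ^ (n - 1) * (-1) ^ qVal ((localComp G i).induce {j | j ≠ i}) y := by
    intro y
    rw [graphState, hcard, hc]
    push_cast
    rfl
  refine ⟨(1 + Complex.I) * c, (1 - Complex.I) * c, ?_, ?_, ?_, ?_⟩
  · rw [norm_mul, habsc]
    have h1 : ‖1 + Complex.I‖ = Real.sqrt 2 := by
      rw [Complex.norm_def, Complex.normSq_apply]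
      norm_num
    rw [h1, mul_inv_cancel₀ (ne_of_gt hs2)]
  · rw [norm_mul, habsc]
    have h1 : ‖1 - Complex.I‖ = Real.sqrt 2 := by
      rw [Complex.norm_def, Complex.normSq_apply]
      norm_num
    rw [h1, mul_inv_cancel₀ (ne_of_gt hs2)]
  · -- s = 0 case
    intro r
    simp only [Fin.sum_univ_two]
    set x0 : Fin n → Fin 2 := fun k => if h : k = i then 0 else r ⟨k, h⟩ with hx0
    set x1 : Fin n → Fin 2 := fun k => if h : k = i then 1 else r ⟨k, h⟩ with hx1
    have hx0i : x0 i = 0 := by simp [hx0]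
    have hx0ne : ∀ (k : Fin n) (h : k ≠ i), x0 k = r ⟨k, h⟩ := by
      intro k h; simp [hx0, h]
    set m : ℕ := Nat.card {j : Fin n // G.Adj i j ∧ x0 j = 1} with hm
    have e00 : conj (ketY 0 0) = c := by
      simp [ketY, hc, Complex.conj_ofReal]
    have e01 : conj (ketY 0 1) = c * Complex.I := by
      simp [ketY, hc, Complex.conj_ofReal]
    have hupd : x1 = Function.update x0 i 1 := by
      funext k
      by_cases h : k = i <;> simp [hx0, hx1, Function.update_apply, h]
    have hq1 : qVal G x1 = qVal G x0 + m := by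
      rw [hupd, hm]
      exact fact1 G i x0 hx0i
    have hmt : Nat.card {j : ↥{j : Fin n | j ≠ i} // G.Adj i j.1 ∧ r j = 1} = m := by
      rw [hm]
      apply Nat.card_congr
      exact {
        toFun := fun j => ⟨j.1.1, j.2.1, by rw [hx0ne j.1.1 j.1.2]; exact j.2.2⟩
        invFun := fun j => ⟨⟨j.1, (G.ne_of_adj j.2.1).symm⟩, j.2.1,
          by rw [← hx0ne j.1 (G.ne_of_adj j.2.1).symm]; exact j.2.2⟩
        left_inv := fun j => by ext; rfl
        right_inv := fun j => by ext; rfl }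
    obtain ⟨k, hk⟩ := fact2b G i x0
    have h2a : qVal ((localComp G i).induce {j | j ≠ i}) r = qVal (localComp G i) x0 := by
      rw [fact2a (localComp G i) i r, hx0]
    have hQeq : qVal ((localComp G i).induce {j | j ≠ i}) r + 2 * k
        = qVal G x0 + m.choose 2 := by
      rw [h2a, hk, fact2c G i x0, hm]
    have hQC : (-1 : ℂ) ^ qVal ((localComp G i).induce {j | j ≠ i}) r
        = (-1) ^ qVal G x0 * (-1) ^ m.choose 2 := by
      have := congrArg (fun t : ℕ => (-1 : ℂ) ^ t) hQeq
      simpa [pow_add, pow_mul, neg_one_sq] using this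
    have hN1 : Nat.card {j : ↥{j : Fin n | j ≠ i} //
        (fun _ : ↥{j : Fin n | j ≠ i} => (0 : Fin 2)) j = 1 ∧ r j = 1} = 0 := by
      have : IsEmpty {j : ↥{j : Fin n | j ≠ i} //
          (fun _ : ↥{j : Fin n | j ≠ i} => (0 : Fin 2)) j = 1 ∧ r j = 1} :=
        ⟨fun j => by have := j.2.1; simp at this⟩
      exact Nat.card_of_isEmpty
    have hN2 : Nat.card {j : ↥{j : Fin n | j ≠ i} //
        j ∈ {j : ↥{j : Fin n | j ≠ i} | G.Adj i j.1} ∧ r j = 1} = m := by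
      rw [← hmt]
      apply Nat.card_congr
      exact Equiv.subtypeEquivRight (fun j => by simp [Set.mem_setOf_eq])
    have hcc : c ^ n = c ^ (n - 1) * c := by rw [← pow_succ, hn]
    rw [encSq, gse', e00, e01, gse x0, gse x1, hq1, hN1, hN2, hQC, hcc, pow_add]
    linear_combination (c * c * c ^ (n - 1) * (-1 : ℂ) ^ qVal G x0) * keyC0 m
  · -- s = 1 case
    intro r
    simp only [Fin.sum_univ_two]
    set x0 : Fin n → Fin 2 := fun k => if h : k = i then 0 else r ⟨k, h⟩ with hx0
    set x1 : Fin n → Fin 2 := fun k => if h : k = i then 1 else r ⟨k, h⟩ with hx1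
    have hx0i : x0 i = 0 := by simp [hx0]
    have hx0ne : ∀ (k : Fin n) (h : k ≠ i), x0 k = r ⟨k, h⟩ := by
      intro k h; simp [hx0, h]
    set m : ℕ := Nat.card {j : Fin n // G.Adj i j ∧ x0 j = 1} with hm
    have e10 : conj (ketY 1 0) = c := by
      simp [ketY, hc, Complex.conj_ofReal]
    have e11 : conj (ketY 1 1) = c * (-Complex.I) := by
      simp [ketY, hc, Complex.conj_ofReal]
    have hupd : x1 = Function.update x0 i 1 := by
      funext k
      by_cases h : k = i <;> simp [hx0, hx1, Function.update_apply, h]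
    have hq1 : qVal G x1 = qVal G x0 + m := by
      rw [hupd, hm]
      exact fact1 G i x0 hx0i
    have hmt : Nat.card {j : ↥{j : Fin n | j ≠ i} // G.Adj i j.1 ∧ r j = 1} = m := by
      rw [hm]
      apply Nat.card_congr
      exact {
        toFun := fun j => ⟨j.1.1, j.2.1, by rw [hx0ne j.1.1 j.1.2]; exact j.2.2⟩
        invFun := fun j => ⟨⟨j.1, (G.ne_of_adj j.2.1).symm⟩, j.2.1,
          by rw [← hx0ne j.1 (G.ne_of_adj j.2.1).symm]; exact j.2.2⟩
        left_inv := fun j => by ext; rfl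
        right_inv := fun j => by ext; rfl }
    obtain ⟨k, hk⟩ := fact2b G i x0
    have h2a : qVal ((localComp G i).induce {j | j ≠ i}) r = qVal (localComp G i) x0 := by
      rw [fact2a (localComp G i) i r, hx0]
    have hQeq : qVal ((localComp G i).induce {j | j ≠ i}) r + 2 * k
        = qVal G x0 + m.choose 2 := by
      rw [h2a, hk, fact2c G i x0, hm]
    have hQC : (-1 : ℂ) ^ qVal ((localComp G i).induce {j | j ≠ i}) r
        = (-1) ^ qVal G x0 * (-1) ^ m.choose 2 := by
      have := congrArg (fun t : ℕ => (-1 : ℂ) ^ t) hQeq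
      simpa [pow_add, pow_mul, neg_one_sq] using this
    have hN1 : Nat.card {j : ↥{j : Fin n | j ≠ i} //
        (fun j : ↥{j : Fin n | j ≠ i} => if G.Adj i j.1 then (1 : Fin 2) else 0) j = 1
          ∧ r j = 1} = m := by
      rw [← hmt]
      apply Nat.card_congr
      exact Equiv.subtypeEquivRight (fun j => by
        by_cases h : G.Adj i j.1 <;> simp [h])
    have hN2 : Nat.card {j : ↥{j : Fin n | j ≠ i} //
        j ∈ {j : ↥{j : Fin n | j ≠ i} | G.Adj i j.1} ∧ r j = 1} = m := by
      rw [← hmt]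
      apply Nat.card_congr
      exact Equiv.subtypeEquivRight (fun j => by simp [Set.mem_setOf_eq])
    have hcc : c ^ n = c ^ (n - 1) * c := by rw [← pow_succ, hn]
    have hmI : (-1 : ℂ) ^ m * (-Complex.I) ^ m = Complex.I ^ m := by
      rw [← mul_pow]; norm_num
    rw [encSq, gse', e10, e11, gse x0, gse x1, hq1, hN1, hN2, hQC, hcc, pow_add]
    linear_combination (c * c * c ^ (n - 1) * (-1 : ℂ) ^ qVal G x0) * keyC1 m
      - ((1 - Complex.I) * c * c * c ^ (n - 1) * (-1 : ℂ) ^ qVal G x0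
          * (-1 : ℂ) ^ m.choose 2) * hmI


end
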